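/- If (μ_t)_{t≥0} is a family of integrable probability measures with negative means which is non-decreasing in the WDS order, then it is non-decreasing in the decreasing convex order; that is, for every s ≤ t and every x ∈ ℝ, E[(x − X_s)⁺] ≤ E[(x − X_t)⁺] where X_v has law μ_v. -/

import Mathlib

open MeasureTheory Set Filter

noncomputable def meanM (μ : Measure ℝ) : ℝ := ∫ y, y ∂μ

noncomputable def rSupE (μ : Measure ℝ) : EReal :=
  sInf ((fun z : ℝ => (z : EReal)) '' {z : ℝ | μ (Ici z) = 0})

noncomputable def psiWds (μ : Measure ℝ) (x : ℝ) : EReal :=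
  if (x : EReal) < rSupE μ then
    ((((∫ y in Ici x, y ∂μ) - meanM μ) / (μ (Ici x)).toReal : ℝ) : EReal)
  else ⊤

noncomputable def Kfun (μ : Measure ℝ) (x : ℝ) : ℝ :=
  (∫ y in Ici x, (y - x) ∂μ) - meanM μ

noncomputable def phiF (μ : Measure ℝ) (x : ℝ) : ℝ := ∫ y, max (x - y) 0 ∂μ

lemma Kfun_pos (μ : Measure ℝ) (hm : meanM μ < 0) (x : ℝ) : 0 < Kfun μ x := by
  have h1 : 0 ≤ ∫ y in Ici x, (y - x) ∂μ :=
    setIntegral_nonneg measurableSet_Ici (fun y hy => by simp at hy; linarith)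
  rw [Kfun]; linarith

lemma phiF_eq_K (μ : Measure ℝ) [IsProbabilityMeasure μ]
    (h : Integrable (fun y : ℝ => y) μ) (x : ℝ) : phiF μ x = x + Kfun μ x := by
  have hpt : ∀ y : ℝ, max (x - y) 0 = (x - y) + max (y - x) 0 := by
    intro y; rcases le_total y x with hy | hy
    · rw [max_eq_left (by linarith), max_eq_right (by linarith)]; ring
    · rw [max_eq_right (by linarith), max_eq_left (by linarith)]; ring
  have hint1 : Integrable (fun y : ℝ => x - y) μ := (integrable_const x).sub h
  have hint2 : Integrable (fun y : ℝ => max (y - x) 0) μ :=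
    (h.sub (integrable_const x)).sup (integrable_zero _ _ _)
  have h2 : phiF μ x = (∫ y, (x - y) ∂μ) + ∫ y, max (y - x) 0 ∂μ := by
    rw [phiF, ← integral_add hint1 hint2]
    exact integral_congr_ae (Filter.Eventually.of_forall hpt)
  have h3 : (∫ y, (x - y) ∂μ) = x - meanM μ := by
    rw [integral_sub (integrable_const x) h, integral_const, meanM]
    simp
  have h4 : (∫ y, max (y - x) 0 ∂μ) = ∫ y in Ici x, (y - x) ∂μ := by
    rw [← integral_indicator measurableSet_Ici]
    apply integral_congr_ae
    filter_upwards with y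
    rcases le_or_gt x y with hy | hy
    · rw [max_eq_left (by linarith), Set.indicator_of_mem (mem_Ici.mpr hy)]
    · rw [max_eq_right (by linarith), Set.indicator_of_notMem (by simpa using hy)]
  rw [h2, h3, h4, Kfun]; ring

lemma tail_ne (μ : Measure ℝ) {x : ℝ} (hx : (x : EReal) < rSupE μ) : μ (Ici x) ≠ 0 := by
  intro h0
  have : rSupE μ ≤ (x : EReal) := sInf_le ⟨x, h0, rfl⟩
  exact absurd hx (not_lt.mpr this)

lemma tail_zero (μ : Measure ℝ) {x : ℝ} (hx : rSupE μ ≤ (x : EReal)) : μ (Ioi x) = 0 := by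
  have hn : ∀ n : ℕ, μ (Ici (x + 1/(n+1))) = 0 := by
    intro n
    have hlt : rSupE μ < ((x + 1/(n+1) : ℝ) : EReal) := by
      refine lt_of_le_of_lt hx ?_
      rw [EReal.coe_lt_coe_iff]
      have : (0:ℝ) < 1/((n:ℝ)+1) := by positivity
      linarith
    obtain ⟨a, ha, hal⟩ := sInf_lt_iff.mp hlt
    obtain ⟨w, hw0, rfl⟩ := ha
    rw [EReal.coe_lt_coe_iff] at hal
    exact measure_mono_null (Ici_subset_Ici.mpr hal.le) hw0
  refine measure_mono_null (fun y hy => ?_) (measure_iUnion_null hn)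
  rw [mem_Ioi] at hy
  obtain ⟨n, hn'⟩ := exists_nat_one_div_lt (show (0:ℝ) < y - x by linarith)
  exact mem_iUnion.mpr ⟨n, mem_Ici.mpr (by push_cast at hn' ⊢; linarith)⟩

lemma rSup_ne_bot (μ : Measure ℝ) [IsProbabilityMeasure μ] : rSupE μ ≠ ⊥ := by
  intro hbot
  have hn : ∀ n : ℕ, μ (Ici (-(n:ℝ))) = 0 := by
    intro n
    have hlt : rSupE μ < (((-(n:ℝ)) : ℝ) : EReal) := by rw [hbot]; exact EReal.bot_lt_coe _
    obtain ⟨a, ha, hal⟩ := sInf_lt_iff.mp hlt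
    obtain ⟨w, hw0, rfl⟩ := ha
    rw [EReal.coe_lt_coe_iff] at hal
    exact measure_mono_null (Ici_subset_Ici.mpr hal.le) hw0
  have huniv : μ univ = 0 := by
    refine measure_mono_null (fun y _ => ?_) (measure_iUnion_null hn)
    obtain ⟨n, hn'⟩ := exists_nat_ge (-y)
    exact mem_iUnion.mpr ⟨n, mem_Ici.mpr (by linarith)⟩
  rw [measure_univ] at huniv
  exact one_ne_zero huniv

lemma setInt_sub (μ : Measure ℝ) [IsProbabilityMeasure μ]
    (h : Integrable (fun y : ℝ => y) μ) (u : ℝ) :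
    (∫ y in Ici u, (y - u) ∂μ) = (∫ y in Ici u, y ∂μ) - u * (μ (Ici u)).toReal := by
  rw [integral_sub h.integrableOn (integrableOn_const (measure_lt_top _ _).ne)]
  rw [setIntegral_const, measureReal_def, smul_eq_mul, mul_comm]

lemma iio_toReal (μ : Measure ℝ) [IsProbabilityMeasure μ] (u : ℝ) :
    (μ (Iio u)).toReal = 1 - (μ (Ici u)).toReal := by
  have h1 : μ (Iio u) = 1 - μ (Ici u) := by
    rw [← compl_Ici]
    exact prob_compl_eq_one_sub measurableSet_Ici
  rw [h1, ENNReal.toReal_sub_of_le prob_le_one ENNReal.one_ne_top]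
  simp

lemma tails_le (μs μt : Measure ℝ) [IsProbabilityMeasure μs] [IsProbabilityMeasure μt]
    (hs : Integrable (fun y : ℝ => y) μs) (ht : Integrable (fun y : ℝ => y) μt)
    (hmt : meanM μt < 0) {u : ℝ}
    (hpsi : psiWds μs u ≤ psiWds μt u) (hu : (u : EReal) < rSupE μt)
    (hK : Kfun μt u ≤ Kfun μs u) :
    (μs (Iio u)).toReal ≤ (μt (Iio u)).toReal := by
  simp only [psiWds] at hpsi
  rw [if_pos hu] at hpsi
  by_cases hus : (u : EReal) < rSupE μs
  swap
  · rw [if_neg hus] at hpsi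
    exact absurd hpsi (by simp)
  rw [if_pos hus, EReal.coe_le_coe_iff] at hpsi
  set F := (μs (Ici u)).toReal with hFdef
  set G := (μt (Ici u)).toReal with hGdef
  have hF : 0 < F := ENNReal.toReal_pos (tail_ne μs hus) (measure_ne_top _ _)
  have hG : 0 < G := ENNReal.toReal_pos (tail_ne μt hu) (measure_ne_top _ _)
  have hcross : ((∫ y in Ici u, y ∂μs) - meanM μs) * G
      ≤ ((∫ y in Ici u, y ∂μt) - meanM μt) * F := (div_le_div_iff₀ hF hG).mp hpsi
  have hids : (∫ y in Ici u, y ∂μs) - meanM μs = Kfun μs u + u * F := by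
    rw [Kfun, setInt_sub μs hs]; ring
  have hidt : (∫ y in Ici u, y ∂μt) - meanM μt = Kfun μt u + u * G := by
    rw [Kfun, setInt_sub μt ht]; ring
  rw [hids, hidt] at hcross
  have hKG : Kfun μs u * G ≤ Kfun μt u * F := by nlinarith
  have hKt : 0 < Kfun μt u := Kfun_pos μt hmt u
  have hGF : G ≤ F := by nlinarith
  rw [iio_toReal, iio_toReal]
  linarith

lemma tail_integrableOn (μ : Measure ℝ) [IsProbabilityMeasure μ] (c d : ℝ) :
    IntegrableOn (fun u => (μ (Iio u)).toReal) (Ioc c d) volume := by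
  have hmono : Monotone (fun u => (μ (Iio u)).toReal) := by
    intro a b hab
    exact ENNReal.toReal_mono (measure_ne_top _ _) (measure_mono (Iio_subset_Iio hab))
  have hmeas : Measurable (fun u => (μ (Iio u)).toReal) := hmono.measurable
  have hfin : volume (Ioc c d) < ⊤ := by rw [Real.volume_Ioc]; exact ENNReal.ofReal_lt_top
  refine Integrable.mono' (g := fun _ => (1:ℝ)) (integrableOn_const hfin.ne)
    hmeas.aestronglyMeasurable ?_
  filter_upwards with u
  rw [Real.norm_eq_abs, abs_of_nonneg ENNReal.toReal_nonneg]
  exact ENNReal.toReal_le_of_le_ofReal one_pos.le (by rw [ENNReal.ofReal_one]; exact prob_le_one)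

lemma phiF_tail (μ : Measure ℝ) [IsProbabilityMeasure μ] (h : Integrable (fun y : ℝ => y) μ)
    {z : ℝ} (hz : μ (Ioi z) = 0) : phiF μ z = z - meanM μ := by
  have h0 : (∫ y in Ici z, (y - z) ∂μ) = 0 := by
    rw [← integral_indicator measurableSet_Ici]
    apply integral_eq_zero_of_ae
    rw [Filter.EventuallyEq, ae_iff]
    refine measure_mono_null (fun y hy => ?_) hz
    simp only [mem_setOf_eq] at hy
    by_contra hy'
    simp only [mem_Ioi, not_lt] at hy'
    rcases eq_or_lt_of_le hy' with h1 | h1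
    · refine hy ?_
      rw [Set.indicator_of_mem (mem_Ici.mpr h1.ge)]
      simp [h1]
    · refine hy ?_
      rw [Set.indicator_of_notMem (by simpa using h1)]
      simp
  rw [phiF_eq_K μ h z, Kfun, h0]; ring

lemma int_max (μ : Measure ℝ) [IsFiniteMeasure μ] (h : Integrable (fun y : ℝ => y) μ) (x : ℝ) :
    Integrable (fun y => max (x - y) 0) μ :=
  ((integrable_const x).sub h).sup (integrable_zero _ _ _)

lemma phiF_mono (μ : Measure ℝ) [IsFiniteMeasure μ] (h : Integrable (fun y : ℝ => y) μ)
    {a b : ℝ} (hab : a ≤ b) : phiF μ a ≤ phiF μ b := by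
  refine integral_mono (int_max μ h a) (int_max μ h b) (fun y => ?_)
  exact max_le_max (by linarith) le_rfl

lemma phiF_sub_le (μ : Measure ℝ) [IsProbabilityMeasure μ] (h : Integrable (fun y : ℝ => y) μ)
    {a b : ℝ} (hab : a ≤ b) : phiF μ b ≤ phiF μ a + (b - a) := by
  have : phiF μ b ≤ ∫ y, (max (a - y) 0 + (b - a)) ∂μ := by
    refine integral_mono (int_max μ h b) ((int_max μ h a).add (integrable_const _)) (fun y => ?_)
    simp only [max_le_iff]
    constructor
    · have : a - y ≤ max (a-y) 0 := le_max_left _ _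
      linarith
    · have : (0:ℝ) ≤ max (a-y) 0 := le_max_right _ _
      linarith
  simpa [integral_add (int_max μ h a) (integrable_const _), phiF] using this

lemma phiF_cont (μ : Measure ℝ) [IsProbabilityMeasure μ] (h : Integrable (fun y : ℝ => y) μ) :
    Continuous (phiF μ) := by
  have : LipschitzWith 1 (phiF μ) := by
    refine LipschitzWith.of_dist_le_mul (fun a b => ?_)
    rw [Real.dist_eq, Real.dist_eq, NNReal.coe_one, one_mul]
    rcases le_total a b with hab | hab
    · rw [abs_of_nonpos (by linarith [phiF_mono μ h hab]), abs_of_nonpos (by linarith)]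
      have := phiF_sub_le μ h hab; linarith
    · rw [abs_of_nonneg (by linarith [phiF_mono μ h hab]), abs_of_nonneg (by linarith)]
      have := phiF_sub_le μ h hab; linarith
  exact this.continuous

lemma phiF_layer (μ : Measure ℝ) [IsProbabilityMeasure μ] (h : Integrable (fun y : ℝ => y) μ)
    {c d : ℝ} (hcd : c ≤ d) :
    phiF μ d - phiF μ c = ∫ u in Ioc c d, (μ (Iio u)).toReal := by
  have key : ∀ y : ℝ, max (d - y) 0 - max (c - y) 0
      = ∫ u in Ioc c d, (Ioi y).indicator (fun _ => (1:ℝ)) u := by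
    intro y
    rw [setIntegral_indicator measurableSet_Ioi]
    have : Ioc c d ∩ Ioi y = Ioc (max c y) d := by
      ext u; simp only [mem_inter_iff, mem_Ioc, mem_Ioi, max_lt_iff]; tauto
    rw [this, setIntegral_const, smul_eq_mul, mul_one, measureReal_def, Real.volume_Ioc]
    rcases le_total y c with hyc | hcy
    · rw [max_eq_left hyc, ENNReal.toReal_ofReal (by linarith)]
      rw [max_eq_left (by linarith), max_eq_left (by linarith)]
      ring
    · rcases le_total y d with hyd | hdy
      · rw [max_eq_right hcy, ENNReal.toReal_ofReal (by linarith)]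
        rw [max_eq_left (by linarith), max_eq_right (by linarith)]
        ring
      · rw [max_eq_right hcy]
        rw [max_eq_right (by linarith), max_eq_right (by linarith)]
        rw [ENNReal.ofReal_eq_zero.mpr (by linarith : d - y ≤ 0)]
        simp
  have hswap : ∫ y, (∫ u in Ioc c d, (Ioi y).indicator (fun _ => (1:ℝ)) u) ∂μ
      = ∫ u in Ioc c d, (∫ y, (Ioi y).indicator (fun _ => (1:ℝ)) u ∂μ) := by
    apply integral_integral_swap
    have hS : MeasurableSet {p : ℝ × ℝ | p.1 < p.2} :=
      measurableSet_lt measurable_fst measurable_snd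
    have : Function.uncurry (fun (y u : ℝ) => (Ioi y).indicator (fun _ => (1:ℝ)) u)
        = Set.indicator {p : ℝ × ℝ | p.1 < p.2} (fun _ => (1:ℝ)) := by
      ext p
      by_cases hp : p.1 < p.2 <;>
        simp [Function.uncurry, Set.indicator, hp, mem_Ioi]
    rw [this]
    rw [integrable_indicator_iff hS]
    refine integrableOn_const (ne_of_lt ?_)
    have : IsFiniteMeasure (volume.restrict (Ioc c d)) := by
      constructor
      rw [Measure.restrict_apply_univ, Real.volume_Ioc]
      exact ENNReal.ofReal_lt_top
    exact measure_lt_top _ _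
  have hinner : ∀ u : ℝ, (∫ y, (Ioi y).indicator (fun _ => (1:ℝ)) u ∂μ) = (μ (Iio u)).toReal := by
    intro u
    have : (fun y => (Ioi y).indicator (fun _ => (1:ℝ)) u)
        = (Iio u).indicator (fun _ => (1:ℝ)) := by
      ext y
      by_cases hy : y < u <;> simp [Set.indicator, hy, mem_Ioi, mem_Iio]
    rw [this, integral_indicator_const _ measurableSet_Iio, smul_eq_mul, mul_one, measureReal_def]
  rw [phiF, phiF, ← integral_sub (int_max μ h d) (int_max μ h c)]
  calc ∫ y, (max (d - y) 0 - max (c - y) 0) ∂μ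
      = ∫ y, (∫ u in Ioc c d, (Ioi y).indicator (fun _ => (1:ℝ)) u) ∂μ :=
        integral_congr_ae (Filter.Eventually.of_forall (fun y => key y))
    _ = ∫ u in Ioc c d, (∫ y, (Ioi y).indicator (fun _ => (1:ℝ)) u ∂μ) := hswap
    _ = ∫ u in Ioc c d, (μ (Iio u)).toReal :=
        integral_congr_ae (Filter.Eventually.of_forall (fun u => hinner u))

noncomputable def meanM' (μ : Measure ℝ) : ℝ := ∫ y, y ∂μ

lemma phiF_tendsto (μ : Measure ℝ) [IsProbabilityMeasure μ] (h : Integrable (fun y : ℝ => y) μ) :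
    Tendsto (phiF μ) atBot (nhds 0) := by
  have h0 : (0:ℝ) = ∫ y : ℝ, (0:ℝ) ∂μ := by simp
  rw [h0]
  apply tendsto_integral_filter_of_dominated_convergence (fun y => max (0 - y) 0)
  · filter_upwards [eventually_le_atBot (0:ℝ)] with x hx
    exact ((int_max μ h x).1)
  · filter_upwards [eventually_le_atBot (0:ℝ)] with x hx
    filter_upwards with y
    rw [Real.norm_eq_abs, abs_of_nonneg (le_max_right _ _)]
    exact max_le_max (by linarith) le_rfl
  · exact int_max μ h 0
  · filter_upwards with y
    have : ∀ᶠ x in atBot, max (x - y) 0 = 0 := by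
      filter_upwards [eventually_le_atBot y] with x hx
      exact max_eq_right (by linarith)
    exact Tendsto.congr' (this.mono fun x hx => hx.symm) tendsto_const_nhds

theorem stmt7 (μ : ℝ → Measure ℝ)
    (hprob : ∀ t, 0 ≤ t → IsProbabilityMeasure (μ t))
    (hint : ∀ t, 0 ≤ t → Integrable (fun y : ℝ => y) (μ t))
    (hneg : ∀ t, 0 ≤ t → meanM (μ t) < 0)
    (hwds : ∀ s t, 0 ≤ s → s ≤ t → ∀ x : ℝ, psiWds (μ s) x ≤ psiWds (μ t) x) :
    ∀ s t, 0 ≤ s → s ≤ t → ∀ x : ℝ,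
      (∫ y, max (x - y) 0 ∂(μ s)) ≤ ∫ y, max (x - y) 0 ∂(μ t) := by
  intro s t hs hst x
  have hts : 0 ≤ t := le_trans hs hst
  haveI Ps := hprob s hs
  haveI Pt := hprob t hts
  have hIs := hint s hs
  have hIt := hint t hts
  show phiF (μ s) x ≤ phiF (μ t) x
  have main : ∀ z : ℝ, (z : EReal) < rSupE (μ t) → phiF (μ s) z ≤ phiF (μ t) z := by
    intro z hz
    by_contra hcon
    push_neg at hcon
    set h : ℝ → ℝ := fun w => phiF (μ s) w - phiF (μ t) w with hhdef
    have hδ : 0 < h z := by simp only [hhdef]; linarith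
    have hcont : Continuous h := (phiF_cont (μ s) hIs).sub (phiF_cont (μ t) hIt)
    have htend : Tendsto h atBot (nhds 0) := by
      have := (phiF_tendsto (μ s) hIs).sub (phiF_tendsto (μ t) hIt)
      simpa using this
    have hev : ∀ᶠ w in atBot, h w < h z := htend.eventually (gt_mem_nhds hδ)
    obtain ⟨c₀, hc₀⟩ := eventually_atBot.mp hev
    set c₁ := min c₀ z with hc₁def
    have hc₁x : c₁ ≤ z := min_le_right _ _
    have hc₁lt : h c₁ < h z := hc₀ _ (min_le_left _ _)
    obtain ⟨c, hcx, hcδ, hcpos⟩ :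
        ∃ c, c ≤ z ∧ h c < h z ∧ ∀ u ∈ Ioc c z, 0 < h u := by
      by_cases hS : (Icc c₁ z ∩ {w | h w ≤ 0}).Nonempty
      · set S := Icc c₁ z ∩ {w | h w ≤ 0} with hSdef
        have hSclosed : IsClosed S :=
          isClosed_Icc.inter (isClosed_le hcont continuous_const)
        have hSbdd : BddAbove S := (bddAbove_Icc (a := c₁) (b := z)).mono inter_subset_left
        have hcS : sSup S ∈ S := hSclosed.csSup_mem hS hSbdd
        refine ⟨sSup S, hcS.1.2, lt_of_le_of_lt hcS.2 hδ, ?_⟩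
        intro u hu
        by_contra hu0
        push_neg at hu0
        have huS : u ∈ S := ⟨⟨le_trans hcS.1.1 hu.1.le, hu.2⟩, hu0⟩
        exact absurd (le_csSup hSbdd huS) (not_le.mpr hu.1)
      · refine ⟨c₁, hc₁x, hc₁lt, fun u hu => ?_⟩
        by_contra hu0
        push_neg at hu0
        exact hS ⟨u, ⟨hu.1.le, hu.2⟩, hu0⟩
    have hlayer_s := phiF_layer (μ s) hIs hcx
    have hlayer_t := phiF_layer (μ t) hIt hcx
    have hmono : (∫ u in Ioc c z, (μ s (Iio u)).toReal)
        ≤ ∫ u in Ioc c z, (μ t (Iio u)).toReal := by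
      refine setIntegral_mono_on (tail_integrableOn (μ s) c z)
        (tail_integrableOn (μ t) c z) measurableSet_Ioc (fun u hu => ?_)
      have hu' : (u : EReal) < rSupE (μ t) :=
        lt_of_le_of_lt (EReal.coe_le_coe_iff.mpr hu.2) hz
      have hpos := hcpos u hu
      have es := phiF_eq_K (μ s) hIs u
      have et := phiF_eq_K (μ t) hIt u
      have hK : Kfun (μ t) u ≤ Kfun (μ s) u := by
        simp only [hhdef] at hpos; linarith
      exact tails_le (μ s) (μ t) hIs hIt (hneg t hts) (hwds s t hs hst u) hu' hK
    have hfinal : h z ≤ h c := by simp only [hhdef]; linarith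
    linarith
  by_cases hx : (x : EReal) < rSupE (μ t)
  · exact main x hx
  · have hle : rSupE (μ t) ≤ (x : EReal) := not_lt.mp hx
    have hbot : rSupE (μ t) ≠ ⊥ := rSup_ne_bot (μ t)
    have htop : rSupE (μ t) ≠ ⊤ :=
      ne_top_of_le_ne_top (EReal.coe_ne_top x) hle
    set r₀ : ℝ := (rSupE (μ t)).toReal with hr₀def
    have hr₀ : ((r₀ : ℝ) : EReal) = rSupE (μ t) := EReal.coe_toReal htop hbot
    have hr₀x : r₀ ≤ x := by
      rw [← EReal.coe_le_coe_iff, hr₀]; exact hle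
    have htzx : μ t (Ioi x) = 0 := tail_zero (μ t) hle
    have htz₀ : μ t (Ioi r₀) = 0 := tail_zero (μ t) (le_of_eq hr₀.symm)
    have hstep1 : phiF (μ s) r₀ ≤ r₀ - meanM (μ t) := by
      refine le_of_forall_pos_le_add (fun ε hε => ?_)
      have hx' : ((r₀ - ε : ℝ) : EReal) < rSupE (μ t) := by
        rw [← hr₀, EReal.coe_lt_coe_iff]; linarith
      calc phiF (μ s) r₀ ≤ phiF (μ s) (r₀ - ε) + (r₀ - (r₀ - ε)) :=
            phiF_sub_le (μ s) hIs (by linarith)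
        _ ≤ phiF (μ t) (r₀ - ε) + ε := by
            have := main (r₀ - ε) hx'; linarith
        _ ≤ phiF (μ t) r₀ + ε :=
            by have := phiF_mono (μ t) hIt (show r₀ - ε ≤ r₀ by linarith); linarith
        _ = r₀ - meanM (μ t) + ε := by rw [phiF_tail (μ t) hIt htz₀]
    have hstep2 : phiF (μ s) x ≤ phiF (μ s) r₀ + (x - r₀) :=
      phiF_sub_le (μ s) hIs hr₀x
    have hxval : phiF (μ t) x = x - meanM (μ t) := phiF_tail (μ t) hIt htzx
    linarith
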